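/- arXiv:math/0608368 — 2 statements merged into one kernel-verified Lean document; each statement's English description precedes it below -/
import Mathlib

section
/- Let A be a 2n×2n real matrix with A² = −I. Then the skew-symmetric part A₁ = (A − Aᵗ)/2 is an invertible matrix. -/
open Matrix

/-- Let `A` be a `2n×2n` real matrix with `A² = -I`.  Then its skew-symmetric
part `A₁ = (A - Aᵗ)/2` is an invertible matrix. -/
theorem skew_part_invertible (n : ℕ)
    (A : Matrix (Fin (2 * n)) (Fin (2 * n)) ℝ) (hA : A * A = -1) :
    IsUnit ((1 / 2 : ℝ) • (A - Aᵀ)) := by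
  set M := (1 / 2 : ℝ) • (A - Aᵀ) with hM
  rw [Matrix.isUnit_iff_isUnit_det, isUnit_iff_ne_zero]
  intro hdet
  obtain ⟨v, hv, hMv⟩ := (Matrix.exists_mulVec_eq_zero_iff).2 hdet
  apply hv
  have h1 : A.mulVec v = Aᵀ.mulVec v := by
    have : (A - Aᵀ).mulVec v = 0 := by
      have := congrArg (fun w => (2 : ℝ) • w) hMv
      simpa [hM, Matrix.smul_mulVec, smul_smul] using this
    have := sub_eq_zero.mp (by rwa [Matrix.sub_mulVec] at this)
    exact this
  have h2 : A.mulVec (A.mulVec v) = -v := by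
    rw [Matrix.mulVec_mulVec, hA, Matrix.neg_mulVec, Matrix.one_mulVec]
  have h3 : (A.mulVec v) ⬝ᵥ (A.mulVec v) = -(v ⬝ᵥ v) := by
    calc (A.mulVec v) ⬝ᵥ (A.mulVec v)
        = (Aᵀ.mulVec v) ⬝ᵥ (A.mulVec v) := by rw [h1]
      _ = v ⬝ᵥ A.mulVec (A.mulVec v) := by
          rw [Matrix.mulVec_transpose, ← Matrix.dotProduct_mulVec]
      _ = v ⬝ᵥ (-v) := by rw [h2]
      _ = -(v ⬝ᵥ v) := by simp
  have h4 : (0:ℝ) ≤ (A.mulVec v) ⬝ᵥ (A.mulVec v) :=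
    Finset.sum_nonneg fun i _ => mul_self_nonneg _
  have h5 : (0:ℝ) ≤ v ⬝ᵥ v := Finset.sum_nonneg fun i _ => mul_self_nonneg _
  have h6 : v ⬝ᵥ v = 0 := le_antisymm (by linarith [h3 ▸ h4]) h5
  exact dotProduct_self_eq_zero.mp h6
end

section
/- Let e₁, …, e_{2n} be an orthonormal basis of ℝ^{2n}, let λ₁, …, λₙ be real numbers, and let t be a real number. Define A(t) = Σ_{i=1}^{n} √(1 + t²λᵢ²) · ( e_{n+i} eᵢᵗ − eᵢ e_{n+i}ᵗ ) + Σ_{i=1}^{n} t λᵢ · ( eᵢ eᵢᵗ − e_{n+i} e_{n+i}ᵗ ). Then A(t)² = −I. (For t = 1 this is the normal form of an arbitrary complex structure on ℝ^{2n}, and the family A(t) realizes the deformation retraction of 𝒥(ℝ^{2n}) onto the orthogonal twistor space 𝒥̃(ℝ^{2n}).) -/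
open Matrix

lemma vmv_mul {m : Type*} [Fintype m] (a b c d : m → ℝ) :
    vecMulVec a b * vecMulVec c d = (b ⬝ᵥ c) • vecMulVec a d := by
  ext i j
  simp [Matrix.mul_apply, vecMulVec_apply, dotProduct, Finset.sum_mul]
  exact Finset.sum_congr rfl fun k _ => by ring

lemma complete (n : ℕ) (e : Fin n ⊕ Fin n → Fin (2 * n) → ℝ)
    (he : ∀ a b, e a ⬝ᵥ e b = if a = b then 1 else 0) :
    ∑ a : Fin n ⊕ Fin n, vecMulVec (e a) (e a) = 1 := by
  set B : Matrix (Fin n ⊕ Fin n) (Fin (2 * n)) ℝ := Matrix.of e with hB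
  have h1 : B * Bᵀ = 1 := by
    ext a b
    simpa [hB, Matrix.mul_apply, Matrix.one_apply, dotProduct] using he a b
  have h2 : Bᵀ * B = 1 :=
    (Matrix.mul_eq_one_comm_of_equiv
      ((finSumFinEquiv).trans (finCongr (two_mul n).symm))).mp h1
  calc ∑ a : Fin n ⊕ Fin n, vecMulVec (e a) (e a) = Bᵀ * B := by
        ext i j
        simp [Matrix.sum_apply, vecMulVec_apply, Matrix.mul_apply, hB, mul_comm]
    _ = 1 := h2

/-- Let `e₁, …, e_{2n}` be an orthonormal basis of `ℝ^{2n}` (here `e (.inl i)`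
is `eᵢ` and `e (.inr i)` is `e_{n+i}`), let `λ₁, …, λₙ` and `t` be real numbers,
and set
`A(t) = ∑ᵢ √(1 + t²λᵢ²)·(e_{n+i}eᵢᵗ - eᵢe_{n+i}ᵗ) + ∑ᵢ tλᵢ·(eᵢeᵢᵗ - e_{n+i}e_{n+i}ᵗ)`.
Then `A(t)² = -I`. -/
theorem deformation_is_complex_structure (n : ℕ)
    (e : Fin n ⊕ Fin n → Fin (2 * n) → ℝ)
    (he : ∀ a b, e a ⬝ᵥ e b = if a = b then 1 else 0)
    (lam : Fin n → ℝ) (t : ℝ)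
    (A : Matrix (Fin (2 * n)) (Fin (2 * n)) ℝ)
    (hA : A =
      (∑ i : Fin n, Real.sqrt (1 + t ^ 2 * lam i ^ 2) •
        (Matrix.vecMulVec (e (.inr i)) (e (.inl i)) -
          Matrix.vecMulVec (e (.inl i)) (e (.inr i)))) +
      ∑ i : Fin n, (t * lam i) •
        (Matrix.vecMulVec (e (.inl i)) (e (.inl i)) -
          Matrix.vecMulVec (e (.inr i)) (e (.inr i)))) :
    A * A = -1 := by
  set u : Fin n → Fin (2*n) → ℝ := fun i => e (.inl i) with hu
  set v : Fin n → Fin (2*n) → ℝ := fun i => e (.inr i) with hv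
  set s : Fin n → ℝ := fun i => Real.sqrt (1 + t ^ 2 * lam i ^ 2) with hs
  set c : Fin n → ℝ := fun i => t * lam i with hc
  set M : Fin n → Matrix (Fin (2*n)) (Fin (2*n)) ℝ := fun i =>
    s i • (vecMulVec (v i) (u i) - vecMulVec (u i) (v i)) +
    c i • (vecMulVec (u i) (u i) - vecMulVec (v i) (v i)) with hM
  have hAM : A = ∑ i, M i := by rw [hA, ← Finset.sum_add_distrib]
  have hss : ∀ i, s i * s i = 1 + c i * c i := by
    intro i
    have : (0:ℝ) ≤ 1 + t ^ 2 * lam i ^ 2 := by positivity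
    rw [hs, hc]; simp only []
    rw [Real.mul_self_sqrt this]; ring
  have huu : ∀ i j, u i ⬝ᵥ u j = if i = j then 1 else 0 := by
    intro i j; rw [hu]; simpa using he (.inl i) (.inl j)
  have hvv : ∀ i j, v i ⬝ᵥ v j = if i = j then 1 else 0 := by
    intro i j; rw [hv]; simpa using he (.inr i) (.inr j)
  have huv : ∀ i j, u i ⬝ᵥ v j = 0 := by
    intro i j; rw [hu, hv]; simpa using he (.inl i) (.inr j)
  have hvu : ∀ i j, v i ⬝ᵥ u j = 0 := by
    intro i j; rw [hu, hv]; simpa using he (.inr i) (.inl j)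
  have key : ∀ i j, M i * M j =
      if i = j then -(vecMulVec (u i) (u i) + vecMulVec (v i) (v i)) else 0 := by
    intro i j
    rw [hM]
    simp only [add_mul, mul_add, sub_mul, mul_sub, smul_mul_assoc, mul_smul_comm,
      vmv_mul, huu, hvv, huv, hvu, smul_smul]
    by_cases h : i = j
    · subst h
      simp only [if_pos rfl, one_smul, zero_smul, smul_zero, sub_zero, zero_sub]
      have := hss i
      ext a b
      simp [Matrix.add_apply, Matrix.sub_apply, Matrix.smul_apply, Matrix.neg_apply,
        vecMulVec_apply]
      linear_combination (-(u i a * u i b) - v i a * v i b) * hss i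
    · simp [h]
  rw [hAM, Finset.sum_mul_sum]
  have : ∀ i ∈ Finset.univ, ∑ j ∈ Finset.univ, M i * M j
      = -(vecMulVec (u i) (u i) + vecMulVec (v i) (v i)) := by
    intro i _
    rw [Finset.sum_congr rfl (fun j _ => key i j), Finset.sum_ite_eq]
    simp
  rw [Finset.sum_congr rfl this]
  have h1 : ∑ i : Fin n, (vecMulVec (u i) (u i) + vecMulVec (v i) (v i)) = 1 := by
    have h := complete n e he
    rw [Fintype.sum_sum_type] at h
    rw [Finset.sum_add_distrib, hu, hv]
    exact h
  rw [Finset.sum_neg_distrib, h1]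
end
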